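/- Let G(T) be the threshold graph on {1,…,n} with construction sequence T, with degrees d(1),…,d(n). Then the characteristic polynomial of its Laplacian matrix L equals ∏_{i=1}^{n} (X − c_i), where c_i = |{j ∈ {1,…,n} : d(j) ≥ i}|. Equivalently, the multiset of Laplacian eigenvalues of G(T) is the conjugate of its degree sequence: the i-th largest eigenvalue λ_{n−i+1} equals |{j : d(j) ≥ i}| for 1 ≤ i ≤ n. -/

import Mathlib

open Finset Matrix Polynomial

/-- The threshold graph on `Fin n` (vertex `i` of the paper corresponds to `⟨i-1, _⟩ : Fin n`)
with construction sequence `T` : two distinct vertices are adjacent iff the later one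
(in the construction order) was added by a join operation. -/
def thresholdGraph (n : ℕ) (T : Fin n → Bool) : SimpleGraph (Fin n) where
  Adj i j := i ≠ j ∧ T (max i j) = true
  symm := by
    constructor
    intro i j h
    exact ⟨h.1.symm, by rw [max_comm]; exact h.2⟩
  loopless := by
    constructor
    intro i h
    exact h.1 rfl

instance thresholdGraph.instDecidableRelAdj (n : ℕ) (T : Fin n → Bool) :
    DecidableRel (thresholdGraph n T).Adj :=
  fun i j => decidable_of_iff (i ≠ j ∧ T (max i j) = true) Iff.rfl

namespace ThresholdProof

lemma adj_iff {m : ℕ} (T : Fin m → Bool) (i j : Fin m) :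
    (thresholdGraph m T).Adj i j ↔ i ≠ j ∧ T (max i j) = true := Iff.rfl

lemma max_castSucc {n : ℕ} (i j : Fin n) :
    max (Fin.castSucc i) (Fin.castSucc j) = Fin.castSucc (max i j) := by
  rcases le_total i j with h | h
  · simp [max_eq_right h, max_eq_right (Fin.castSucc_le_castSucc_iff.mpr h)]
  · simp [max_eq_left h, max_eq_left (Fin.castSucc_le_castSucc_iff.mpr h)]

lemma adj_castSucc {n : ℕ} (T : Fin (n+1) → Bool) (i j : Fin n) :
    (thresholdGraph (n+1) T).Adj i.castSucc j.castSucc ↔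
      (thresholdGraph n (fun k => T k.castSucc)).Adj i j := by
  rw [adj_iff, adj_iff, max_castSucc]
  simp [Fin.castSucc_inj]

lemma adj_last {n : ℕ} (T : Fin (n+1) → Bool) (i : Fin n) :
    (thresholdGraph (n+1) T).Adj i.castSucc (Fin.last n) ↔ T (Fin.last n) = true := by
  rw [adj_iff]
  simp [max_eq_right (Fin.le_last _), (Fin.castSucc_lt_last i).ne]

lemma degree_eq_sum {m : ℕ} (G : SimpleGraph (Fin m)) [DecidableRel G.Adj] (v : Fin m) :
    G.degree v = ∑ w, if G.Adj v w then 1 else 0 := by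
  rw [← SimpleGraph.card_neighborFinset_eq_degree, SimpleGraph.neighborFinset_eq_filter,
    Finset.card_filter]

lemma degree_castSucc {n : ℕ} (T : Fin (n+1) → Bool) (i : Fin n) :
    (thresholdGraph (n+1) T).degree i.castSucc =
      (thresholdGraph n (fun k => T k.castSucc)).degree i +
        (if T (Fin.last n) then 1 else 0) := by
  rw [degree_eq_sum, degree_eq_sum, Fin.sum_univ_castSucc]
  congr 1
  · exact Finset.sum_congr rfl fun j _ => by simp only [adj_castSucc T i j]
  · by_cases h : T (Fin.last n) = true
    · simp [(adj_last T i).mpr h, h]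
    · simp only [Bool.not_eq_true] at h
      simp [adj_last, h]

lemma degree_last {n : ℕ} (T : Fin (n+1) → Bool) :
    (thresholdGraph (n+1) T).degree (Fin.last n) = if T (Fin.last n) then n else 0 := by
  rw [degree_eq_sum, Fin.sum_univ_castSucc]
  have h1 : ∀ j : Fin n, (thresholdGraph (n+1) T).Adj (Fin.last n) j.castSucc ↔
      T (Fin.last n) = true := fun j => ⟨fun h => ((adj_last T j).mp h.symm),
        fun h => ((adj_last T j).mpr h).symm⟩
  have h2 : ¬ (thresholdGraph (n+1) T).Adj (Fin.last n) (Fin.last n) :=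
    (thresholdGraph (n+1) T).loopless.irrefl _
  rw [if_neg h2, add_zero]
  by_cases h : T (Fin.last n) = true
  · simp [h1, h]
  · simp only [Bool.not_eq_true] at h
    simp [h1, h]

def cc (m : ℕ) (T : Fin m → Bool) (i : ℕ) : ℕ :=
  (Finset.univ.filter (fun j : Fin m => i + 1 ≤ (thresholdGraph m T).degree j)).card

lemma cc_eq_sum (m : ℕ) (T : Fin m → Bool) (i : ℕ) :
    cc m T i = ∑ j : Fin m, if i + 1 ≤ (thresholdGraph m T).degree j then 1 else 0 :=
  Finset.card_filter _ _

lemma cc_top (m : ℕ) (T : Fin m → Bool) (i : ℕ) (h : m ≤ i + 1) : cc m T i = 0 := by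
  rw [cc_eq_sum]
  refine Finset.sum_eq_zero fun j _ => ?_
  rw [if_neg]
  intro hle
  exact absurd (lt_of_lt_of_le ((thresholdGraph m T).degree_lt_card_verts j)
    (by simpa using h)) (not_lt.mpr hle)

lemma cc_false {n : ℕ} (T : Fin (n+1) → Bool) (hb : T (Fin.last n) = false) (i : ℕ) :
    cc (n+1) T i = cc n (fun k => T k.castSucc) i := by
  rw [cc_eq_sum, cc_eq_sum, Fin.sum_univ_castSucc]
  have hb' : (if T (Fin.last n) then 1 else 0) = 0 := by simp [hb]
  simp only [degree_castSucc, hb', add_zero, degree_last, hb, if_false]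
  simp

lemma cc_true_zero {n : ℕ} (T : Fin (n+1) → Bool) (hb : T (Fin.last n) = true)
    (hn : 1 ≤ n) : cc (n+1) T 0 = n + 1 := by
  rw [cc_eq_sum, Fin.sum_univ_castSucc]
  simp only [degree_castSucc, hb, if_true, degree_last]
  simp [Nat.succ_le_iff, hn]

lemma cc_true_succ {n : ℕ} (T : Fin (n+1) → Bool) (hb : T (Fin.last n) = true) (i : ℕ) :
    cc (n+1) T (i+1) = cc n (fun k => T k.castSucc) i + (if i + 2 ≤ n then 1 else 0) := by
  rw [cc_eq_sum, cc_eq_sum, Fin.sum_univ_castSucc]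
  simp only [degree_castSucc, hb, if_true, degree_last]
  congr 1
  refine Finset.sum_congr rfl fun j _ => ?_
  congr 1
  simp [Nat.succ_le_succ_iff]

lemma lap_apply {m : ℕ} (G : SimpleGraph (Fin m)) [DecidableRel G.Adj] (i j : Fin m) :
    G.lapMatrix ℝ i j = if i = j then (G.degree i : ℝ) else if G.Adj i j then -1 else 0 := by
  simp only [SimpleGraph.lapMatrix, Matrix.sub_apply, SimpleGraph.degMatrix,
    Matrix.diagonal_apply, SimpleGraph.adjMatrix_apply]
  split_ifs with h1 h2 h3 <;> simp_all

lemma eL {n : ℕ} (i : Fin n) : finSumFinEquiv (Sum.inl i : Fin n ⊕ Fin 1) = i.castSucc := by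
  ext; simp

lemma eR {n : ℕ} (i : Fin 1) : finSumFinEquiv (Sum.inr i : Fin n ⊕ Fin 1) = Fin.last n := by
  ext; simp [Fin.last]

lemma lap_submatrix {n : ℕ} (T : Fin (n+1) → Bool) :
    (((thresholdGraph (n+1) T).lapMatrix ℝ).submatrix finSumFinEquiv finSumFinEquiv :
        Matrix (Fin n ⊕ Fin 1) (Fin n ⊕ Fin 1) ℝ) =
      Matrix.fromBlocks
        ((thresholdGraph n (fun k => T k.castSucc)).lapMatrix ℝ +
          (if T (Fin.last n) then 1 else 0 : ℝ) • 1)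
        (Matrix.replicateCol (Fin 1) (fun _ => -(if T (Fin.last n) then 1 else 0 : ℝ)))
        (Matrix.replicateRow (Fin 1) (fun _ => -(if T (Fin.last n) then 1 else 0 : ℝ)))
        (Matrix.of fun _ _ => (if T (Fin.last n) then 1 else 0 : ℝ) * n) := by
  set t : ℝ := if T (Fin.last n) then 1 else 0 with ht
  ext p q
  rcases p with i | i <;> rcases q with j | j <;>
    simp only [Matrix.submatrix_apply, eL, eR, Matrix.fromBlocks_apply₁₁,
      Matrix.fromBlocks_apply₁₂, Matrix.fromBlocks_apply₂₁, Matrix.fromBlocks_apply₂₂,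
      Matrix.replicateCol_apply, Matrix.replicateRow_apply, Matrix.of_apply]
  · rw [lap_apply]
    by_cases hij : i = j
    · subst hij
      simp only [if_pos rfl, Matrix.add_apply, Matrix.smul_apply, Matrix.one_apply_eq,
        smul_eq_mul, mul_one, lap_apply]
      rw [degree_castSucc]
      push_cast
      rw [ht]
    · have hcs : i.castSucc ≠ j.castSucc := fun h => hij (Fin.castSucc_injective _ h)
      rw [if_neg hcs]
      simp only [Matrix.add_apply, Matrix.smul_apply, Matrix.one_apply_ne hij, smul_eq_mul,
        mul_zero, add_zero, lap_apply, if_neg hij]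
      simp only [adj_castSucc]
  · have hne : i.castSucc ≠ Fin.last n := (Fin.castSucc_lt_last i).ne
    rw [lap_apply, if_neg hne, ht]
    by_cases hb : T (Fin.last n) = true
    · simp [hb, (adj_last T i).mpr hb]
    · simp only [Bool.not_eq_true] at hb
      have hna : ¬ (thresholdGraph (n+1) T).Adj i.castSucc (Fin.last n) := fun h => by
        simpa [hb] using (adj_last T i).mp h
      simp [hb, hna]
  · have hne : Fin.last n ≠ j.castSucc := ((Fin.castSucc_lt_last j).ne).symm
    rw [lap_apply, if_neg hne, ht]
    by_cases hb : T (Fin.last n) = true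
    · simp [hb, (thresholdGraph (n+1) T).adj_symm ((adj_last T j).mpr hb)]
    · simp only [Bool.not_eq_true] at hb
      have hna : ¬ (thresholdGraph (n+1) T).Adj (Fin.last n) j.castSucc := fun h => by
        simpa [hb] using (adj_last T j).mp ((thresholdGraph (n+1) T).adj_symm h)
      simp [hb, hna]
  · rw [lap_apply, if_pos rfl, degree_last, ht]
    split_ifs <;> simp

lemma charpoly_eq_blocks {n : ℕ} (T : Fin (n+1) → Bool) :
    ((thresholdGraph (n+1) T).lapMatrix ℝ).charpoly =
      (Matrix.fromBlocks
        ((thresholdGraph n (fun k => T k.castSucc)).lapMatrix ℝ +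
          (if T (Fin.last n) then 1 else 0 : ℝ) • 1)
        (Matrix.replicateCol (Fin 1) (fun _ => -(if T (Fin.last n) then 1 else 0 : ℝ)))
        (Matrix.replicateRow (Fin 1) (fun _ => -(if T (Fin.last n) then 1 else 0 : ℝ)))
        (Matrix.of fun _ _ => (if T (Fin.last n) then 1 else 0 : ℝ) * n)).charpoly := by
  rw [← Matrix.charpoly_reindex (finSumFinEquiv : Fin n ⊕ Fin 1 ≃ Fin (n+1))]
  congr 1
  rw [Matrix.reindex_apply]
  rw [← lap_submatrix T]
  ext p q
  simp

noncomputable def psi : Polynomial ℝ →+* Polynomial ℝ := Polynomial.compRingHom (X - 1)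

lemma psi_apply (p : Polynomial ℝ) : psi p = p.comp (X - 1) := rfl

lemma charmatrix_map_psi {k : ℕ} (M : Matrix (Fin k) (Fin k) ℝ) :
    (charmatrix M).map psi = charmatrix M - 1 := by
  ext i j
  by_cases h : i = j
  · subst h
    simp only [Matrix.map_apply, charmatrix_apply_eq, psi_apply, Matrix.sub_apply,
      Matrix.one_apply_eq, sub_comp, X_comp, C_comp]
    ring
  · simp only [Matrix.map_apply, charmatrix_apply_ne _ _ _ h, psi_apply, Matrix.sub_apply,
      Matrix.one_apply_ne h, neg_comp, C_comp, sub_zero]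

lemma det_charmatrix_sub_one {k : ℕ} (M : Matrix (Fin k) (Fin k) ℝ) :
    (charmatrix M - 1).det = M.charpoly.comp (X - 1) := by
  rw [← charmatrix_map_psi, ← RingHom.mapMatrix_apply, ← RingHom.map_det]
  rfl

lemma comp_X_sub_one_ne_zero {p : Polynomial ℝ} (hp : p ≠ 0) : p.comp (X - 1) ≠ 0 := by
  intro h
  apply hp
  have h2 := congrArg (fun q : Polynomial ℝ => q.comp (X + 1)) h
  simpa [comp_assoc, sub_comp, add_comp, X_comp, one_comp] using h2

lemma det_charmatrix_sub_one_ne_zero {k : ℕ} (M : Matrix (Fin k) (Fin k) ℝ) :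
    (charmatrix M - 1).det ≠ 0 := by
  rw [det_charmatrix_sub_one]
  exact comp_X_sub_one_ne_zero M.charpoly_monic.ne_zero

set_option maxHeartbeats 2000000 in
lemma key_det {k : ℕ} (Lp : Matrix (Fin k) (Fin k) ℝ)
    (hrow : ∀ i, ∑ j, Lp i j = 0) (hcol : ∀ j, ∑ i, Lp i j = 0) :
    (Matrix.fromBlocks (Lp + 1)
        (Matrix.replicateCol (Fin 1) (fun _ => (-1 : ℝ)))
        (Matrix.replicateRow (Fin 1) (fun _ => (-1 : ℝ)))
        (Matrix.of fun _ _ => (k : ℝ))).charpoly * (X - 1)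
      = X * (X - C ((k : ℝ) + 1)) * (charmatrix Lp - 1).det := by
  classical
  -- the charmatrix of the block matrix
  have hA : charmatrix (Lp + 1) = charmatrix Lp - 1 := by
    ext i j : 2
    by_cases h : i = j
    · subst h
      simp only [charmatrix_apply_eq, Matrix.add_apply, Matrix.one_apply_eq, map_add, C_1,
        Matrix.sub_apply]
      ring
    · simp only [charmatrix_apply_ne _ _ _ h, Matrix.add_apply, Matrix.one_apply_ne h, add_zero,
        Matrix.sub_apply, Matrix.one_apply_ne h, sub_zero]
  have hB : -((Matrix.replicateCol (Fin 1) (fun _ : Fin k => (-1 : ℝ))).map C) =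
      Matrix.replicateCol (Fin 1) (fun _ : Fin k => (1 : Polynomial ℝ)) := by
    ext i j : 2
    simp [Matrix.map_apply, Matrix.replicateCol_apply]
  have hC : -((Matrix.replicateRow (Fin 1) (fun _ : Fin k => (-1 : ℝ))).map C) =
      Matrix.replicateRow (Fin 1) (fun _ : Fin k => (1 : Polynomial ℝ)) := by
    ext i j : 2
    simp [Matrix.map_apply, Matrix.replicateRow_apply]
  have hD : charmatrix (Matrix.of fun _ _ : Fin 1 => (k : ℝ)) =
      Matrix.of (fun _ _ : Fin 1 => (X - C (k : ℝ))) := by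
    ext i j : 2
    have : i = j := Subsingleton.elim i j
    subst this
    rw [charmatrix_apply_eq]
    rfl
  unfold Matrix.charpoly
  rw [charmatrix_fromBlocks, hA, hB, hC, hD]
  set K : Matrix (Fin k) (Fin k) (Polynomial ℝ) := charmatrix Lp - 1 with hK
  have hKdet : K.det ≠ 0 := det_charmatrix_sub_one_ne_zero Lp
  -- row and column sums of K
  have hKrow : ∀ i, ∑ j, K i j = X - 1 := by
    intro i
    rw [hK]
    simp only [Matrix.sub_apply]
    rw [Finset.sum_sub_distrib]
    have h1 : ∑ j, charmatrix Lp i j = X := by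
      have : ∀ j, charmatrix Lp i j = (if i = j then (X : Polynomial ℝ) else 0) - C (Lp i j) := by
        intro j
        by_cases h : i = j
        · subst h; rw [charmatrix_apply_eq, if_pos rfl]
        · rw [charmatrix_apply_ne _ _ _ h, if_neg h]; ring_nf
      rw [Finset.sum_congr rfl fun j _ => this j, Finset.sum_sub_distrib, ← map_sum, hrow i,
        map_zero, sub_zero, Finset.sum_ite_eq univ i (fun _ => (X : Polynomial ℝ))]
      simp
    have h2 : ∑ j, (1 : Matrix (Fin k) (Fin k) (Polynomial ℝ)) i j = 1 := by
      simp [Matrix.one_apply]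
    rw [h1, h2]
  have hKcol : ∀ j, ∑ i, K i j = X - 1 := by
    intro j
    rw [hK]
    simp only [Matrix.sub_apply]
    rw [Finset.sum_sub_distrib]
    have h1 : ∑ i, charmatrix Lp i j = X := by
      have : ∀ i, charmatrix Lp i j = (if i = j then (X : Polynomial ℝ) else 0) - C (Lp i j) := by
        intro i
        by_cases h : i = j
        · subst h; rw [charmatrix_apply_eq, if_pos rfl]
        · rw [charmatrix_apply_ne _ _ _ h, if_neg h]; ring_nf
      rw [Finset.sum_congr rfl fun i _ => this i, Finset.sum_sub_distrib, ← map_sum, hcol j,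
        map_zero, sub_zero, Finset.sum_ite_eq' univ j (fun _ => (X : Polynomial ℝ))]
      simp
    have h2 : ∑ i, (1 : Matrix (Fin k) (Fin k) (Polynomial ℝ)) i j = 1 := by
      simp [Matrix.one_apply]
    rw [h1, h2]
  -- move to the fraction field
  set F := FractionRing (Polynomial ℝ) with hF
  set φ : Polynomial ℝ →+* F := algebraMap (Polynomial ℝ) F with hphi
  have hφ : Function.Injective φ := IsFractionRing.injective (Polynomial ℝ) F
  have hXk : (X - (k : Polynomial ℝ)) ≠ 0 := by
    rw [← Polynomial.C_eq_natCast]; exact X_sub_C_ne_zero _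
  have hX1 : (X - 1 : Polynomial ℝ) ≠ 0 := by
    rw [← C_1]; exact X_sub_C_ne_zero _
  have hxkne : φ X - (k : F) ≠ 0 := by
    have h := (map_ne_zero_iff φ hφ).mpr hXk
    rwa [_root_.map_sub, _root_.map_natCast] at h
  have hx1ne : φ X - 1 ≠ 0 := by
    have h := (map_ne_zero_iff φ hφ).mpr hX1
    rwa [_root_.map_sub, _root_.map_one] at h
  apply hφ
  rw [_root_.map_mul, _root_.map_mul, _root_.map_mul, RingHom.map_det, RingHom.map_det, RingHom.mapMatrix_apply,
    RingHom.mapMatrix_apply, Matrix.fromBlocks_map]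
  set KF : Matrix (Fin k) (Fin k) F := K.map φ with hKF
  have hUF : (Matrix.replicateCol (Fin 1) (fun _ : Fin k => (1 : Polynomial ℝ))).map φ =
      Matrix.replicateCol (Fin 1) (fun _ : Fin k => (1 : F)) := by
    ext i j : 2; simp
  have hVF : (Matrix.replicateRow (Fin 1) (fun _ : Fin k => (1 : Polynomial ℝ))).map φ =
      Matrix.replicateRow (Fin 1) (fun _ : Fin k => (1 : F)) := by
    ext i j : 2; simp
  have hDF : (Matrix.of fun _ _ : Fin 1 => (X - C (k : ℝ))).map φ =
      Matrix.of fun _ _ : Fin 1 => (φ X - (k : F)) := by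
    ext i j : 2
    simp only [Matrix.map_apply, Matrix.of_apply, _root_.map_sub]
    rw [Polynomial.C_eq_natCast, _root_.map_natCast]
  rw [hUF, hVF, hDF]
  haveI : Invertible (Matrix.of fun _ _ : Fin 1 => (φ X - (k : F))) :=
    Matrix.invertibleOfIsUnitDet _ (by
      rw [Matrix.det_fin_one]; exact isUnit_iff_ne_zero.mpr hxkne)
  rw [Matrix.det_fromBlocks₂₂]
  have hinv : ⅟(Matrix.of fun _ _ : Fin 1 => (φ X - (k : F))) =
      Matrix.of fun _ _ : Fin 1 => (φ X - (k : F))⁻¹ := by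
    apply invOf_eq_right_inv
    ext i j : 2
    obtain rfl : i = j := Subsingleton.elim i j
    simp only [Matrix.mul_apply, Fin.sum_univ_one, Matrix.of_apply, Matrix.one_apply_eq]
    exact mul_inv_cancel₀ hxkne
  have hSchur : KF - Matrix.replicateCol (Fin 1) (fun _ : Fin k => (1 : F)) *
        ⅟(Matrix.of fun _ _ : Fin 1 => (φ X - (k : F))) *
        Matrix.replicateRow (Fin 1) (fun _ : Fin k => (1 : F)) =
      KF + Matrix.replicateCol (Fin 1) (fun _ : Fin k => -(φ X - (k : F))⁻¹) *
        Matrix.replicateRow (Fin 1) (fun _ : Fin k => (1 : F)) := by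
    rw [hinv]
    ext i j : 2
    simp only [Matrix.sub_apply, Matrix.add_apply, Matrix.mul_apply, Fin.sum_univ_one,
      Matrix.replicateCol_apply, Matrix.replicateRow_apply, Matrix.of_apply]
    ring
  have hKFdetne : KF.det ≠ 0 := by
    rw [hKF, ← RingHom.mapMatrix_apply, ← RingHom.map_det]
    exact (map_ne_zero_iff φ hφ).mpr hKdet
  have hKFunit : IsUnit KF.det := isUnit_iff_ne_zero.mpr hKFdetne
  rw [hSchur]
  erw [Matrix.det_add_replicateCol_mul_replicateRow (ι := Fin 1) hKFunit]
  -- column sums of KF⁻¹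
  have hcolsum : ∀ j, ∑ i, KF i j = φ X - 1 := by
    intro j
    rw [hKF]
    simp only [Matrix.map_apply]
    rw [← _root_.map_sum, hKcol j, _root_.map_sub, _root_.map_one]
  have hvKF : (fun _ : Fin k => (1 : F)) ᵥ* KF = fun _ => φ X - 1 := by
    funext j
    simp only [Matrix.vecMul, dotProduct, one_mul]
    exact hcolsum j
  have hvinv : (fun _ : Fin k => (1 : F)) ᵥ* KF⁻¹ = fun _ => (φ X - 1)⁻¹ := by
    have h0 : ((fun _ : Fin k => (1 : F)) ᵥ* KF) ᵥ* KF⁻¹ = (fun _ : Fin k => (1 : F)) := by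
      rw [Matrix.vecMul_vecMul, Matrix.mul_nonsing_inv _ hKFunit, Matrix.vecMul_one]
    rw [hvKF] at h0
    funext j
    have h2 := congrFun h0 j
    have h3 : ((fun _ : Fin k => φ X - 1) ᵥ* KF⁻¹) j =
        (φ X - 1) * (((fun _ : Fin k => (1 : F)) ᵥ* KF⁻¹) j) := by
      simp only [Matrix.vecMul, dotProduct, one_mul, Finset.mul_sum]
    rw [h3] at h2
    exact (inv_eq_of_mul_eq_one_right h2).symm
  have hRHS : φ (X - C ((k : ℝ) + 1)) = φ X - ((k : F) + 1) := by
    rw [_root_.map_sub]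
    congr 1
    rw [_root_.map_add, Polynomial.C_eq_natCast, _root_.map_add, _root_.map_natCast, C_1,
      _root_.map_one]
  have hdot : ((fun _ : Fin k => (φ X - 1)⁻¹) ⬝ᵥ fun _ => -(φ X - (k : F))⁻¹) =
      -((k : F) * ((φ X - 1)⁻¹ * (φ X - (k : F))⁻¹)) := by
    simp only [dotProduct, mul_neg, Finset.sum_neg_distrib, Finset.sum_const,
      Finset.card_univ, Fintype.card_fin, nsmul_eq_mul]
    ring
  rw [← Matrix.replicateRow_vecMul, hvinv, hRHS, _root_.map_sub, _root_.map_one]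
  simp only [Matrix.det_unique, Matrix.det_fin_one, Matrix.add_apply, Matrix.one_apply_eq,
    Matrix.of_apply, Matrix.replicateRow_mul_replicateCol_apply]
  rw [hdot]
  linear_combination (-(KF.det) * (k : F) * (φ X - 1) * (φ X - 1)⁻¹) * mul_inv_cancel₀ hxkne + (-(KF.det) * (k : F)) * mul_inv_cancel₀ hx1ne

lemma lap_symm_entry {m : ℕ} (G : SimpleGraph (Fin m)) [DecidableRel G.Adj] (i j : Fin m) :
    G.lapMatrix ℝ i j = G.lapMatrix ℝ j i := by
  rw [lap_apply, lap_apply]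
  by_cases h : i = j
  · subst h; rfl
  · rw [if_neg h, if_neg (Ne.symm h)]
    by_cases ha : G.Adj i j
    · rw [if_pos ha, if_pos (G.adj_symm ha)]
    · rw [if_neg ha, if_neg (fun h' => ha (G.adj_symm h'))]

lemma lap_row_sum {m : ℕ} (G : SimpleGraph (Fin m)) [DecidableRel G.Adj] (i : Fin m) :
    ∑ j, G.lapMatrix ℝ i j = 0 := by
  have h := congrFun (G.lapMatrix_mulVec_const_eq_zero (R := ℝ)) i
  simpa [Matrix.mulVec, dotProduct] using h

lemma lap_col_sum {m : ℕ} (G : SimpleGraph (Fin m)) [DecidableRel G.Adj] (j : Fin m) :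
    ∑ i, G.lapMatrix ℝ i j = 0 := by
  rw [Finset.sum_congr rfl fun i _ => lap_symm_entry G i j]
  exact lap_row_sum G j

lemma hX1ne : (X - 1 : Polynomial ℝ) ≠ 0 := by
  rw [← C_1]; exact X_sub_C_ne_zero _

theorem main (m : ℕ) : ∀ (T : Fin m → Bool),
    ((thresholdGraph m T).lapMatrix ℝ).charpoly =
      ∏ i : Fin m, (X - C ((cc m T (i : ℕ) : ℝ))) := by
  induction m with
  | zero =>
      intro T
      unfold Matrix.charpoly
      rw [Matrix.det_isEmpty]
      simp
  | succ n ih =>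
      intro T
      rcases n with _ | m
      · -- one-vertex graph
        have hdeg : (thresholdGraph 1 T).degree 0 = 0 := by
          rw [degree_eq_sum, Fin.sum_univ_one, if_neg ((thresholdGraph 1 T).loopless.irrefl 0)]
        have hcc : cc 1 T 0 = 0 := by
          rw [cc_eq_sum, Fin.sum_univ_one]
          simp [hdeg]
        have hL : (thresholdGraph 1 T).lapMatrix ℝ 0 0 = 0 := by
          rw [lap_apply, if_pos rfl, hdeg]; simp
        unfold Matrix.charpoly
        rw [Matrix.det_fin_one, charmatrix_apply_eq, hL, Fin.prod_univ_one]
        norm_num [hcc]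
      · set T' : Fin (m+1) → Bool := fun k => T k.castSucc with hT'
        set Lp := (thresholdGraph (m+1) T').lapMatrix ℝ with hLp
        rw [charpoly_eq_blocks T]
        by_cases hb : T (Fin.last (m+1)) = true
        · -- dominating last vertex
          simp only [hb, if_true, one_smul, one_mul]
          have hkey := key_det Lp (lap_row_sum _) (lap_col_sum _)
          have hQ : (charmatrix Lp - 1).det = ∏ i : Fin (m+1), (X - 1 - C ((cc (m+1) T' (i : ℕ) : ℝ))) := by
            rw [← charmatrix_map_psi, ← RingHom.mapMatrix_apply, ← RingHom.map_det]
            show psi Lp.charpoly = _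
            rw [ih, map_prod]
            refine Finset.prod_congr rfl fun i _ => ?_
            rw [psi_apply, sub_comp, X_comp, C_comp]
          rw [hQ] at hkey
          -- combinatorial product identity
          have h0 : cc (m+1+1) T 0 = (m+1) + 1 := cc_true_zero T hb (by omega)
          have hf : ∀ i : Fin (m+1),
              (X - C ((cc (m+1+1) T ((Fin.succ i : Fin (m+1+1)) : ℕ) : ℝ))) =
              (X - C ((cc (m+1) T' (i : ℕ) + (if (i : ℕ) + 2 ≤ m+1 then 1 else 0) : ℕ) : ℝ)) := by
            intro i
            have hsucc : ((Fin.succ i : Fin (m+1+1)) : ℕ) = (i : ℕ) + 1 := rfl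
            rw [hsucc, cc_true_succ T hb]
          have hlast1 : cc (m+1) T' ((Fin.last m : Fin (m+1)) : ℕ) = 0 :=
            cc_top (m+1) T' _ (by simp)
          have hlast2 : (cc (m+1) T' ((Fin.last m : Fin (m+1)) : ℕ)
              + (if ((Fin.last m : Fin (m+1)) : ℕ) + 2 ≤ m+1 then 1 else 0) : ℕ) = 0 := by
            rw [hlast1]
            simp
          have hterm : ∀ i : Fin m,
              (X - C ((cc (m+1) T' ((Fin.castSucc i : Fin (m+1)) : ℕ)
                  + (if ((Fin.castSucc i : Fin (m+1)) : ℕ) + 2 ≤ m+1 then 1 else 0) : ℕ) : ℝ)) =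
              (X - 1 - C ((cc (m+1) T' ((Fin.castSucc i : Fin (m+1)) : ℕ) : ℝ))) := by
            intro i
            have hle : ((Fin.castSucc i : Fin (m+1)) : ℕ) + 2 ≤ m+1 := by
              have := i.isLt
              simp only [Fin.coe_castSucc]
              omega
            rw [if_pos hle]
            push_cast [map_add, C_1]
            ring
          have hcomb : (∏ i : Fin (m+1+1), (X - C ((cc (m+1+1) T (i : ℕ) : ℝ)))) * (X - 1)
              = X * (X - C ((↑(m+1) : ℝ) + 1)) *
                ∏ i : Fin (m+1), (X - 1 - C ((cc (m+1) T' (i : ℕ) : ℝ))) := by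
            rw [Fin.prod_univ_succ
              (f := fun i : Fin (m+1+1) => X - C ((cc (m+1+1) T (i : ℕ) : ℝ)))]
            rw [Finset.prod_congr rfl fun i _ => hf i]
            rw [Fin.prod_univ_castSucc (f := fun i : Fin (m+1) =>
              X - C ((cc (m+1) T' (i : ℕ) + (if (i : ℕ) + 2 ≤ m+1 then 1 else 0) : ℕ) : ℝ))]
            rw [Fin.prod_univ_castSucc (f := fun i : Fin (m+1) =>
              X - 1 - C ((cc (m+1) T' (i : ℕ) : ℝ)))]
            rw [Finset.prod_congr rfl fun i _ => hterm i, hlast2, hlast1]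
            have hc0 : ((cc (m+1+1) T ((0 : Fin (m+1+1)) : ℕ) : ℕ) : ℝ) = ((m+1 : ℕ) : ℝ) + 1 := by
              rw [show ((0 : Fin (m+1+1)) : ℕ) = 0 from rfl, h0]
              push_cast
              ring
            rw [hc0]
            simp only [Nat.cast_zero, map_zero]
            ring
          apply mul_right_cancel₀ hX1ne
          rw [hkey, hcomb]
        · -- isolated last vertex
          simp only [Bool.not_eq_true] at hb
          simp only [hb, Bool.false_eq_true, if_false, zero_smul, add_zero, neg_zero, zero_mul]
          have hcol0 : (Matrix.replicateCol (Fin 1) (fun _ : Fin (m+1) => (0:ℝ))) = 0 := by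
            ext i j : 2; simp
          have hrow0 : (Matrix.replicateRow (Fin 1) (fun _ : Fin (m+1) => (0:ℝ))) = 0 := by
            ext i j : 2; simp
          have hof0 : (Matrix.of fun _ _ : Fin 1 => (0:ℝ)) = 0 := by
            ext i j : 2; simp
          rw [hcol0, hrow0, hof0]
          unfold Matrix.charpoly
          rw [charmatrix_fromBlocks]
          have hm0 : -((0 : Matrix (Fin (m+1)) (Fin 1) ℝ).map C) = 0 := by
            ext i j : 2; simp
          have hm0' : -((0 : Matrix (Fin 1) (Fin (m+1)) ℝ).map C) = 0 := by
            ext i j : 2; simp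
          rw [hm0, hm0', Matrix.det_fromBlocks_zero₂₁]
          have hD : (charmatrix (0 : Matrix (Fin 1) (Fin 1) ℝ)).det = X := by
            rw [Matrix.det_fin_one, charmatrix_apply_eq]
            simp
          rw [hD]
          show Lp.charpoly * X = _
          rw [ih]
          rw [Fin.prod_univ_castSucc (n := m+1)]
          have hlast : cc (m+1+1) T ((Fin.last (m+1) : Fin (m+1+1)) : ℕ) = 0 := cc_top _ _ _ (by simp)
          rw [hlast]
          have hcs : ∀ i : Fin (m+1),
              (X - C ((cc (m+1+1) T ((Fin.castSucc i : Fin (m+1+1)) : ℕ) : ℝ))) =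
              (X - C ((cc (m+1) T' (i : ℕ) : ℝ))) := by
            intro i
            rw [cc_false T hb]
            rfl
          rw [Finset.prod_congr rfl fun i _ => hcs i]
          simp

end ThresholdProof

/-- the characteristic polynomial of the Laplacian of a threshold graph is
`∏_{i=1}^{n} (X − c_i)` where `c_i = |{j : d(j) ≥ i}|`; i.e. the Laplacian spectrum is the
conjugate of the degree sequence. (Paper index `i ∈ {1,…,n}` corresponds to `i : Fin n`
via `i ↦ (i : ℕ) + 1`.) -/
theorem charpoly_thresholdGraph_conjugate_degrees (n : ℕ) (T : Fin n → Bool) (hn : 0 < n)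
    (hT1 : T ⟨0, hn⟩ = false) :
    ((thresholdGraph n T).lapMatrix ℝ).charpoly =
      ∏ i : Fin n,
        (X - C (((Finset.univ.filter
          (fun j : Fin n => (i : ℕ) + 1 ≤ (thresholdGraph n T).degree j)).card : ℝ))) := by
  exact ThresholdProof.main n T
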